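/- arXiv:1403.3763 — 5 statements merged into one kernel-verified Lean document; each statement's English description precedes it below -/
import Mathlib

section
/- Let (e_j) be an orthonormal family in a Hilbert space H, and on the Boolean Fock space Γ(H) set b_j := b(e_j), b†_j := b†(e_j). Then the operators ε_{##} := b_i b†_i (independent of i), ε_{#j} := b_j, ε_{j#} := b†_j, and ε_{ij} := b†_i b_j satisfy the matrix-unit relations: ε_{mn} ε_{pq} = δ_{np} ε_{mq} and ε_{mn}* = ε_{nm}, for indices m, n, p, q ranging over {#} ∪ the index set. -/
/-- For an orthonormal family `(e_j)_{j∈J}` in `H`, the operators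
`ε_{##} := b_i b†_i` (independent of `i`), `ε_{#j} := b_j`, `ε_{j#} := b†_j`,
`ε_{ij} := b†_i b_j` on the Boolean Fock space `Γ(H) = ℂ ⊕ H` satisfy the
matrix-unit relations `ε_{mn} ε_{pq} = δ_{np} ε_{mq}` and `ε_{mn}* = ε_{nm}`,
for indices in `{#} ∪ J` (encoded as `Option J`, `none = #`). -/
theorem boolean_matrix_units
    (H : Type*) [NormedAddCommGroup H] [InnerProductSpace ℂ H] [CompleteSpace H]
    (J : Type*) [DecidableEq J] [Nonempty J]
    (e : J → H) (he : Orthonormal ℂ e)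
    (b bd : H → (WithLp 2 (ℂ × H) →L[ℂ] WithLp 2 (ℂ × H)))
    (hb : ∀ (f : H) (x : WithLp 2 (ℂ × H)),
      b f x = (WithLp.equiv 2 (ℂ × H)).symm ((inner ℂ f (WithLp.equiv 2 (ℂ × H) x).2 : ℂ), (0 : H)))
    (hbd : ∀ (f : H) (x : WithLp 2 (ℂ × H)),
      bd f x = (WithLp.equiv 2 (ℂ × H)).symm ((0 : ℂ), (WithLp.equiv 2 (ℂ × H) x).1 • f))
    (ε : Option J → Option J → (WithLp 2 (ℂ × H) →L[ℂ] WithLp 2 (ℂ × H)))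
    (hε1 : ∀ j : J, ε none (some j) = b (e j))
    (hε2 : ∀ j : J, ε (some j) none = bd (e j))
    (hε3 : ∀ i : J, ε none none = b (e i) ∘L bd (e i))
    (hε4 : ∀ i j : J, ε (some i) (some j) = bd (e i) ∘L b (e j)) :
    (∀ m n p q : Option J,
        ε m n ∘L ε p q = if n = p then ε m q else 0)
    ∧ (∀ m n : Option J,
        ContinuousLinearMap.adjoint (ε m n) = ε n m) := by
  obtain ⟨i0⟩ := ‹Nonempty J›
  have hfst : ∀ (p : ℂ × H), (WithLp.equiv 2 (ℂ × H) ((WithLp.equiv 2 (ℂ × H)).symm p)).1 = p.1 := fun _ => rfl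
  have hsnd : ∀ (p : ℂ × H), (WithLp.equiv 2 (ℂ × H) ((WithLp.equiv 2 (ℂ × H)).symm p)).2 = p.2 := fun _ => rfl
  have hee : ∀ i j : J, (inner ℂ (e i) (e j) : ℂ) = if i = j then 1 else 0 :=
    orthonormal_iff_ite.mp he
  have ext2 : ∀ (a c : WithLp 2 (ℂ × H)), (WithLp.equiv 2 (ℂ × H) a).1 = (WithLp.equiv 2 (ℂ × H) c).1 →
      (WithLp.equiv 2 (ℂ × H) a).2 = (WithLp.equiv 2 (ℂ × H) c).2 → a = c := by
    intro a c h1 h2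
    exact (WithLp.equiv 2 (ℂ × H)).injective (Prod.ext h1 h2)
  have E1 : ∀ (j : J) x, ε none (some j) x
      = (WithLp.equiv 2 (ℂ × H)).symm ((inner ℂ (e j) (WithLp.equiv 2 (ℂ × H) x).2 : ℂ), (0 : H)) := by
    intro j x; rw [hε1, hb]
  have E2 : ∀ (j : J) x, ε (some j) none x
      = (WithLp.equiv 2 (ℂ × H)).symm ((0 : ℂ), (WithLp.equiv 2 (ℂ × H) x).1 • e j) := by
    intro j x; rw [hε2, hbd]
  have E3 : ∀ x, ε none none x = (WithLp.equiv 2 (ℂ × H)).symm ((WithLp.equiv 2 (ℂ × H) x).1, (0 : H)) := by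
    intro x
    rw [hε3 i0]
    simp [hb, hbd, hsnd, hfst, inner_smul_right, hee, he.1 i0]
  have E4 : ∀ (i j : J) x, ε (some i) (some j) x
      = (WithLp.equiv 2 (ℂ × H)).symm ((0 : ℂ), (inner ℂ (e j) (WithLp.equiv 2 (ℂ × H) x).2 : ℂ) • e i) := by
    intro i j x
    rw [hε4, ContinuousLinearMap.comp_apply, hb, hbd]
    simp [hfst]
  constructor
  · intro m n p q
    ext x
    rcases m with _ | m <;> rcases n with _ | n <;> rcases p with _ | p <;>
      rcases q with _ | q <;>
      apply ext2 <;>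
      simp [E1, E2, E3, E4, hfst, hsnd, inner_smul_right, hee, Option.some_inj,
        apply_ite, ite_apply]
    all_goals (split <;> intro hnp <;> exact absurd ‹n = p› ‹¬n = p›)
  · have hip : ∀ x y : WithLp 2 (ℂ × H),
        (inner ℂ x y : ℂ) = (starRingEnd ℂ) (WithLp.equiv 2 (ℂ × H) x).1 * (WithLp.equiv 2 (ℂ × H) y).1
            + inner ℂ (WithLp.equiv 2 (ℂ × H) x).2 (WithLp.equiv 2 (ℂ × H) y).2 := by
      intro x y; simp [WithLp.prod_inner_apply, RCLike.inner_apply]; ring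
    intro m n
    symm
    rw [ContinuousLinearMap.eq_adjoint_iff]
    intro x y
    rcases m with _ | m <;> rcases n with _ | n <;>
      simp [E1, E2, E3, E4, hip, hfst, hsnd, inner_smul_left, inner_smul_right] <;>
      ring
end

section
/- Let T = Σ_k λ_k ⟨·, ξ_k⟩ξ_k be a positive trace-class operator with Tr(T) = 1 on a Hilbert space H (spectral decomposition with orthonormal eigenvectors ξ_k and λ_k > 0), and suppose the unit vector e_# is NOT an eigenvector of T but ⟨e_#, ξ_{j₀}⟩ ≠ 0 for some j₀ with λ_{j₀} maximal among {λ_k : ⟨e_#, ξ_k⟩ ≠ 0}. Then for the rank-one operator X := ⟨·, ξ_{j₀}⟩ e_# one has |Σ_k (λ_k/λ_{j₀}) |⟨e_#, ξ_k⟩|²| < Σ_k |⟨e_#, ξ_k⟩|² ≤ 1; in particular Tr(T·(⟨X e_#, e_#⟩ P_#)) ≠ Tr(T X) whenever the left inequality is strict, showing no conditional expectation of the form F_φ(A) = ⟨A e_#, e_#⟩P_# + φ(P_#^⊥AP_#^⊥)P_#^⊥ preserves ψ_T = Tr(T ·). -/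
/-- If `e_#` is a unit vector which is NOT an eigenvector of the
positive trace-class operator `T = Σ_k λ_k⟨·,ξ_k⟩ξ_k` (`Tr T = 1`, `λ_k > 0`,
`(ξ_k)` orthonormal), and `λ_{j₀}` is maximal among `{λ_k : ⟨e_#,ξ_k⟩ ≠ 0}`
with `inf_{j∈J} λ_j < λ_{j₀}`, then for the rank-one operator
`X := ⟨·,ξ_{j₀}⟩e_#` one has
`|Σ_k (λ_k/λ_{j₀})|⟨e_#,ξ_k⟩|²| < Σ_k |⟨e_#,ξ_k⟩|² ≤ 1`; in particular
`Tr(T(⟨Xe_#,e_#⟩P_#)) ≠ Tr(TX)`, so no conditional expectation of the given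
form preserves `ψ_T`. -/
theorem no_expectation_if_not_eigenvector
    (H : Type*) [NormedAddCommGroup H] [InnerProductSpace ℂ H] [CompleteSpace H]
    (esharp : H) (he : ‖esharp‖ = 1)
    (P : H →L[ℂ] H) (hP : ∀ x, P x = (inner ℂ esharp x : ℂ) • esharp)
    (ξ : ℕ → H) (hξ : Orthonormal ℂ ξ)
    (lamk : ℕ → ℝ) (hlamk : ∀ k, 0 < lamk k)
    (hlamsum : HasSum lamk 1)
    (T : H →L[ℂ] H)
    (hT : ∀ x, HasSum (fun k => (lamk k : ℂ) • ((inner ℂ (ξ k) x : ℂ) • ξ k)) (T x))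
    (hnoteig : ∀ μ : ℂ, T esharp ≠ μ • esharp)
    (ψT : (H →L[ℂ] H) → ℂ)
    (hψT : ∀ Y, ψT Y = ∑' k, (lamk k : ℂ) * (inner ℂ (ξ k) (Y (ξ k)) : ℂ))
    (hψTsum : ∀ Y : H →L[ℂ] H,
      Summable (fun k => (lamk k : ℂ) * (inner ℂ (ξ k) (Y (ξ k)) : ℂ)))
    (j₀ : ℕ) (hj₀ : (inner ℂ esharp (ξ j₀) : ℂ) ≠ 0)
    (hmax : ∀ k, (inner ℂ esharp (ξ k) : ℂ) ≠ 0 → lamk k ≤ lamk j₀)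
    (hinf : sInf {r : ℝ | ∃ k, (inner ℂ esharp (ξ k) : ℂ) ≠ 0 ∧ r = lamk k} < lamk j₀)
    (X : H →L[ℂ] H) (hX : ∀ v, X v = (inner ℂ (ξ j₀) v : ℂ) • esharp) :
    |∑' k, (lamk k / lamk j₀) * ‖(inner ℂ esharp (ξ k) : ℂ)‖ ^ 2|
        < ∑' k, ‖(inner ℂ esharp (ξ k) : ℂ)‖ ^ 2
    ∧ ∑' k, ‖(inner ℂ esharp (ξ k) : ℂ)‖ ^ 2 ≤ 1
    ∧ ψT ((inner ℂ esharp (X esharp) : ℂ) • P) ≠ ψT X := by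
  classical
  set a : ℕ → ℝ := fun k => ‖(inner ℂ esharp (ξ k) : ℂ)‖ ^ 2 with ha
  have hnormsymm : ∀ k, ‖(inner ℂ esharp (ξ k) : ℂ)‖ = ‖(inner ℂ (ξ k) esharp : ℂ)‖ := by
    intro k; exact norm_inner_symm _ _
  have ha_nonneg : ∀ k, 0 ≤ a k := fun k => sq_nonneg _
  have hsum_a : Summable a := by
    have := hξ.inner_products_summable (x := esharp)
    refine this.congr fun k => ?_
    simp only [ha, hnormsymm k]
  have hbessel : ∑' k, a k ≤ 1 := by
    have := hξ.tsum_inner_products_le (x := esharp)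
    rw [he] at this
    calc ∑' k, a k = ∑' k, ‖(inner ℂ (ξ k) esharp : ℂ)‖ ^ 2 := by
          congr 1; funext k; rw [ha]; simp [hnormsymm k]
      _ ≤ 1 ^ 2 := this
      _ = 1 := one_pow 2
  -- find k₀ with inner ≠ 0 and lamk k₀ < lamk j₀
  obtain ⟨k₀, hk₀ne, hk₀lt⟩ :
      ∃ k, (inner ℂ esharp (ξ k) : ℂ) ≠ 0 ∧ lamk k < lamk j₀ := by
    by_contra hcon
    push_neg at hcon
    have hlb : lamk j₀ ≤ sInf {r : ℝ | ∃ k, (inner ℂ esharp (ξ k) : ℂ) ≠ 0 ∧ r = lamk k} := by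
      refine le_csInf ⟨lamk j₀, ⟨j₀, hj₀, rfl⟩⟩ ?_
      rintro r ⟨k, hk, rfl⟩
      exact hcon k hk
    exact absurd hinf (not_lt.mpr hlb)
  -- termwise inequality
  have hle : ∀ k, (lamk k / lamk j₀) * a k ≤ a k := by
    intro k
    by_cases hk : (inner ℂ esharp (ξ k) : ℂ) = 0
    · simp [ha, hk]
    · have h1 : lamk k / lamk j₀ ≤ 1 :=
        (div_le_one (hlamk j₀)).mpr (hmax k hk)
      calc (lamk k / lamk j₀) * a k ≤ 1 * a k :=
            mul_le_mul_of_nonneg_right h1 (ha_nonneg k)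
        _ = a k := one_mul _
  have hnonneg : ∀ k, 0 ≤ (lamk k / lamk j₀) * a k := fun k =>
    mul_nonneg (div_nonneg (hlamk k).le (hlamk j₀).le) (ha_nonneg k)
  have hstrict : (lamk k₀ / lamk j₀) * a k₀ < a k₀ := by
    have hak₀ : 0 < a k₀ := by
      have := norm_pos_iff.mpr hk₀ne
      positivity
    have : lamk k₀ / lamk j₀ < 1 := (div_lt_one (hlamk j₀)).mpr hk₀lt
    calc (lamk k₀ / lamk j₀) * a k₀ < 1 * a k₀ :=
          mul_lt_mul_of_pos_right this hak₀
      _ = a k₀ := one_mul _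
  have hlt : ∑' k, (lamk k / lamk j₀) * a k < ∑' k, a k :=
    Summable.tsum_lt_tsum_of_nonneg hnonneg hle hstrict hsum_a
  have habs : |∑' k, (lamk k / lamk j₀) * a k| = ∑' k, (lamk k / lamk j₀) * a k :=
    abs_of_nonneg (tsum_nonneg hnonneg)
  refine ⟨by rw [habs]; exact hlt, hbessel, ?_⟩
  -- third part
  have hsumf : Summable fun k => (lamk k / lamk j₀) * a k :=
    Summable.of_nonneg_of_le hnonneg hle hsum_a
  have hkey : ∑' k, lamk k * a k < lamk j₀ := by
    have h1 : ∑' k, lamk k * a k = lamk j₀ * ∑' k, (lamk k / lamk j₀) * a k := by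
      rw [← tsum_mul_left]
      congr 1; funext k
      have hne := (hlamk j₀).ne'
      field_simp
    rw [h1]
    calc lamk j₀ * ∑' k, (lamk k / lamk j₀) * a k
        < lamk j₀ * 1 := by
          apply mul_lt_mul_of_pos_left _ (hlamk j₀)
          exact lt_of_lt_of_le hlt hbessel
      _ = lamk j₀ := mul_one _
  -- compute the two ψT values
  have hee : (inner ℂ esharp esharp : ℂ) = 1 := by
    rw [inner_self_eq_norm_sq_to_K, he]; norm_num
  set c : ℂ := (inner ℂ (ξ j₀) esharp : ℂ) with hc
  have hc_ne : c ≠ 0 := by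
    rw [hc]
    intro h0
    apply hj₀
    rw [← inner_conj_symm esharp (ξ j₀), h0, map_zero]
  have hXe : (inner ℂ esharp (X esharp) : ℂ) = c := by
    rw [hX, inner_smul_right, hee, mul_one]
  have hterm : ∀ k, (inner ℂ esharp (ξ k) : ℂ) * (inner ℂ (ξ k) esharp : ℂ) = (a k : ℂ) := by
    intro k
    rw [← inner_conj_symm esharp (ξ k), RCLike.conj_mul]
    simp only [ha, hnormsymm k]
    norm_cast
  have hψ1 : ψT ((inner ℂ esharp (X esharp) : ℂ) • P) = c * ∑' k, ((lamk k * a k : ℝ) : ℂ) := by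
    rw [hψT, ← tsum_mul_left]
    congr 1; funext k
    rw [hXe]
    simp only [ContinuousLinearMap.smul_apply, inner_smul_right, hP, inner_smul_right]
    rw [hterm k]
    push_cast
    ring
  have hψ2 : ψT X = (lamk j₀ : ℂ) * c := by
    rw [hψT]
    rw [tsum_eq_single j₀]
    · rw [hX, inner_smul_right]
      have : (inner ℂ (ξ j₀) (ξ j₀) : ℂ) = 1 := by
        rw [inner_self_eq_norm_sq_to_K, hξ.1 j₀]; norm_num
      rw [this, one_mul, hc]
    · intro k hk
      rw [hX, inner_smul_right]
      have : (inner ℂ (ξ j₀) (ξ k) : ℂ) = 0 := hξ.2 (Ne.symm hk)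
      rw [this, zero_mul, mul_zero]
  rw [hψ1, hψ2]
  intro heq
  have h2 : (∑' k, ((lamk k * a k : ℝ) : ℂ)) = (lamk j₀ : ℂ) := by
    exact mul_left_cancel₀ hc_ne (by rw [heq]; ring)
  rw [← Complex.ofReal_tsum] at h2
  have h3 : ∑' k, lamk k * a k = lamk j₀ := by exact_mod_cast h2
  exact absurd h3 (ne_of_lt hkey)
end

section
/- There exists a conditional expectation of the form F_φ(A) = ⟨A e_#, e_#⟩P_# + φ(P_#^⊥ A P_#^⊥)P_#^⊥ onto ℂP_# ⊕ ℂP_#^⊥ preserving the normal state ψ_T(A) = Tr(TA) if and only if e_# is an eigenvector of T. -/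
open scoped ComplexOrder

/-- There exists a conditional expectation of the form
`F_φ(A) = ⟨Ae_#,e_#⟩P_# + φ(P_#^⊥AP_#^⊥)P_#^⊥` (with `φ` a, not necessarily
normal, state on `B(H)`) preserving the normal state `ψ_T(A) = Tr(TA)` if and
only if `e_#` is an eigenvector of `T`.  Here `T` is a positive trace-class
operator with `Tr T = 1`, given by its spectral decomposition. -/
theorem expectation_preserving_iff_eigenvector
    (H : Type*) [NormedAddCommGroup H] [InnerProductSpace ℂ H] [CompleteSpace H]
    (esharp : H) (he : ‖esharp‖ = 1)
    (P : H →L[ℂ] H) (hP : ∀ x, P x = (inner ℂ esharp x : ℂ) • esharp)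
    (ξ : ℕ → H) (hξ : Orthonormal ℂ ξ)
    (lamk : ℕ → ℝ) (hlamk : ∀ k, 0 ≤ lamk k)
    (hlamsum : HasSum lamk 1)
    (T : H →L[ℂ] H)
    (hT : ∀ x, HasSum (fun k => (lamk k : ℂ) • ((inner ℂ (ξ k) x : ℂ) • ξ k)) (T x))
    (ψT : (H →L[ℂ] H) → ℂ)
    (hψT : ∀ Y, ψT Y = ∑' k, (lamk k : ℂ) * (inner ℂ (ξ k) (Y (ξ k)) : ℂ))
    (hψTsum : ∀ Y : H →L[ℂ] H,
      Summable (fun k => (lamk k : ℂ) * (inner ℂ (ξ k) (Y (ξ k)) : ℂ))) :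
    (∃ φ : (H →L[ℂ] H) →ₗ[ℂ] ℂ,
        (∀ A : H →L[ℂ] H, A.IsPositive → 0 ≤ φ A) ∧ φ 1 = 1 ∧
        ∀ X : H →L[ℂ] H,
          ψT ((inner ℂ esharp (X esharp) : ℂ) • P
              + φ ((1 - P) ∘L X ∘L (1 - P)) • (1 - P)) = ψT X)
    ↔ ∃ μ : ℂ, T esharp = μ • esharp := by
  have hee : (inner ℂ esharp esharp : ℂ) = 1 := by
    rw [inner_self_eq_norm_sq_to_K, he]; norm_num
  have hQapp : ∀ x : H, (1 - P) x = x - (inner ℂ esharp x : ℂ) • esharp := by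
    intro x
    simp [ContinuousLinearMap.sub_apply, hP]
  have heQ : ∀ x : H, (inner ℂ esharp ((1 - P) x) : ℂ) = 0 := by
    intro x
    rw [hQapp]
    simp [inner_sub_right, inner_smul_right, hee, he]
  have hQe : (1 - P) esharp = 0 := by
    rw [hQapp]; simp [hee, he]
  have hQQapp : ∀ x : H, (1 - P) ((1 - P) x) = (1 - P) x := by
    intro x
    conv_lhs => rw [hQapp ((1 - P) x)]
    rw [heQ]; simp
  have psi_add : ∀ Y Z : H →L[ℂ] H, ψT (Y + Z) = ψT Y + ψT Z := by
    intro Y Z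
    rw [hψT, hψT, hψT, ← Summable.tsum_add (hψTsum Y) (hψTsum Z)]
    exact tsum_congr fun k => by
      simp only [ContinuousLinearMap.add_apply, inner_add_right]; ring
  have psi_smul : ∀ (c : ℂ) (Y : H →L[ℂ] H), ψT (c • Y) = c * ψT Y := by
    intro c Y
    rw [hψT, hψT, ← tsum_mul_left]
    exact tsum_congr fun k => by
      simp only [ContinuousLinearMap.smul_apply, inner_smul_right]; ring
  have psi_PX : ∀ X : H →L[ℂ] H, ψT (P ∘L X) = inner ℂ esharp (X (T esharp)) := by
    intro X
    have h1 := (hT esharp).mapL ((innerSL ℂ esharp).comp X)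
    rw [hψT]
    refine (tsum_congr fun k => ?_).trans h1.tsum_eq
    simp only [ContinuousLinearMap.comp_apply, innerSL_apply_apply, hP, inner_smul_right, map_smul,
      ContinuousLinearMap.smul_apply, smul_eq_mul]
    ring
  have psi_XP : ∀ X : H →L[ℂ] H, ψT (X ∘L P) = inner ℂ (T esharp) (X esharp) := by
    intro X
    have h1 := (hT esharp).mapL (innerSL ℂ (X esharp))
    have h2 : HasSum
        (fun k => (starRingEnd ℂ) ((innerSL ℂ (X esharp))
          ((lamk k : ℂ) • ((inner ℂ (ξ k) esharp : ℂ) • ξ k))))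
        ((starRingEnd ℂ) (inner ℂ (X esharp) (T esharp) : ℂ)) :=
      Complex.hasSum_conj'.mpr h1
    rw [hψT]
    refine (tsum_congr fun k => ?_).trans
      (h2.tsum_eq.trans (inner_conj_symm (T esharp) (X esharp)))
    simp only [ContinuousLinearMap.comp_apply, innerSL_apply_apply, hP, inner_smul_right,
      inner_smul_left, map_mul, Complex.conj_ofReal, smul_eq_mul, inner_conj_symm,
      map_smul, ContinuousLinearMap.smul_apply]
  -- positivity of inner products of positive operators
  have inner_pos : ∀ (A : H →L[ℂ] H), A.IsPositive → ∀ x : H,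
      (inner ℂ x (A x) : ℂ) = (((inner ℂ x (A x) : ℂ).re : ℝ) : ℂ) ∧
        0 ≤ (inner ℂ x (A x) : ℂ).re := by
    intro A hA x
    have hsym := hA.1
    constructor
    · have h1 : (starRingEnd ℂ) (inner ℂ x (A x) : ℂ) = inner ℂ x (A x) := by
        rw [inner_conj_symm]
        simpa using hsym x x
      exact (Complex.conj_eq_iff_re.mp h1).symm
    · have := hA.inner_nonneg_right x
      exact (Complex.nonneg_iff.mp this).1
  constructor
  · -- forward direction
    rintro ⟨φ, hpos, hone, hpres⟩
    have hmem : T esharp ∈ ((ℂ ∙ esharp)ᗮ)ᗮ := by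
      rw [Submodule.mem_orthogonal]
      intro v hv
      have hve : (inner ℂ esharp v : ℂ) = 0 :=
        hv esharp (Submodule.mem_span_singleton_self esharp)
      set Xv : H →L[ℂ] H := (innerSL ℂ esharp).smulRight v with hXv
      have hXvapp : ∀ x : H, Xv x = (inner ℂ esharp x : ℂ) • v := by
        intro x
        simp [hXv, ContinuousLinearMap.smulRight_apply, innerSL_apply_apply]
      have hXvQ : (1 - P) ∘L Xv ∘L (1 - P) = 0 := by
        ext x
        simp [ContinuousLinearMap.comp_apply, hXvapp, hP, inner_smul_right, hee, hve, he]
      have hXve : (inner ℂ esharp (Xv esharp) : ℂ) = 0 := by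
        rw [hXvapp, inner_smul_right, hee]; simp [hve]
      have h0 := hpres Xv
      rw [hXvQ, hXve, map_zero, zero_smul, zero_smul, add_zero] at h0
      have hψ0 : ψT (0 : H →L[ℂ] H) = 0 := by
        rw [hψT]; simp
      rw [hψ0] at h0
      have hXvP : Xv ∘L P = Xv := by
        ext x
        simp [ContinuousLinearMap.comp_apply, hXvapp, hP, inner_smul_right, hee, he]
      have hval : ψT Xv = inner ℂ (T esharp) v := by
        rw [← hXvP, psi_XP, hXvapp, inner_smul_right, hee]
        simp
      have hTv : (inner ℂ (T esharp) v : ℂ) = 0 := by rw [← hval, ← h0]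
      rw [← inner_conj_symm, hTv, map_zero]
    have hspan : T esharp ∈ (ℂ ∙ esharp) := by
      rwa [Submodule.orthogonal_orthogonal] at hmem
    obtain ⟨μ, hμ⟩ := Submodule.mem_span_singleton.mp hspan
    exact ⟨μ, hμ.symm⟩
  · -- backward direction
    rintro ⟨μ, hTe⟩
    have hxi : ∀ k, (inner ℂ (ξ k) (ξ k) : ℂ) = 1 := fun k => by
      rw [inner_self_eq_norm_sq_to_K, hξ.1 k]; norm_num
    set g : ℕ → ℝ := fun k => lamk k * Complex.normSq (inner ℂ (ξ k) esharp : ℂ) with hg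
    have hterm : ∀ k, (innerSL ℂ esharp) ((lamk k : ℂ) • ((inner ℂ (ξ k) esharp : ℂ) • ξ k))
        = ((g k : ℝ) : ℂ) := by
      intro k
      simp only [innerSL_apply_apply, inner_smul_right, hg]
      rw [← inner_conj_symm esharp (ξ k), Complex.mul_conj]
      push_cast
      ring
    have hμC : HasSum (fun k => ((g k : ℝ) : ℂ)) μ := by
      have h1 := (hT esharp).mapL (innerSL ℂ esharp)
      rw [hTe] at h1
      simp only [innerSL_apply_apply, inner_smul_right, hee, mul_one] at h1
      have h2 : ∀ k, (lamk k : ℂ) * ((inner ℂ (ξ k) esharp : ℂ) * (inner ℂ esharp (ξ k) : ℂ))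
          = ((g k : ℝ) : ℂ) := by
        intro k
        simpa only [innerSL_apply_apply, inner_smul_right] using hterm k
      simpa only [h2] using h1
    have him : μ.im = 0 := by
      have h := hμC.mapL Complex.imCLM
      simp only [Complex.imCLM_apply, Complex.ofReal_im] at h
      exact (h.unique hasSum_zero)
    have hre : HasSum g μ.re := by
      have h := hμC.mapL Complex.reCLM
      simpa only [Complex.reCLM_apply, Complex.ofReal_re] using h
    have hμeq : μ = ((μ.re : ℝ) : ℂ) := by
      apply Complex.ext <;> simp [him]
    have hgle : ∀ k, g k ≤ lamk k := by
      intro k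
      have hnorm : ‖(inner ℂ (ξ k) esharp : ℂ)‖ ≤ 1 := by
        calc ‖(inner ℂ (ξ k) esharp : ℂ)‖ ≤ ‖ξ k‖ * ‖esharp‖ := norm_inner_le_norm _ _
          _ = 1 := by rw [hξ.1 k, he]; norm_num
      have hsq : Complex.normSq (inner ℂ (ξ k) esharp : ℂ) ≤ 1 := by
        rw [← Complex.sq_norm]
        calc ‖(inner ℂ (ξ k) esharp : ℂ)‖ ^ 2 ≤ 1 ^ 2 := by
              apply pow_le_pow_left₀ (norm_nonneg _) _ 2
              simpa using hnorm
          _ = 1 := one_pow 2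
      calc g k = lamk k * Complex.normSq (inner ℂ (ξ k) esharp : ℂ) := rfl
        _ ≤ lamk k * 1 := mul_le_mul_of_nonneg_left hsq (hlamk k)
        _ = lamk k := mul_one _
    have hle : μ.re ≤ 1 := hasSum_le hgle hre hlamsum
    have hpsiP : ψT P = μ := by
      have hP1 : P ∘L (1 : H →L[ℂ] H) = P := by ext x; rfl
      have h := psi_PX 1
      rw [hP1] at h
      rw [h, ContinuousLinearMap.one_apply, hTe, inner_smul_right, hee, mul_one]
    have hpsi1 : ψT (1 : H →L[ℂ] H) = 1 := by
      rw [hψT]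
      have h : HasSum (fun k => ((lamk k : ℝ) : ℂ)) ((1 : ℝ) : ℂ) :=
        Complex.hasSum_ofReal.mpr hlamsum
      rw [Complex.ofReal_one] at h
      rw [← h.tsum_eq]
      exact tsum_congr fun k => by
        rw [ContinuousLinearMap.one_apply, hxi k, mul_one]
    have psi_sub : ∀ Y Z : H →L[ℂ] H, ψT (Y - Z) = ψT Y - ψT Z := by
      intro Y Z
      have h := psi_add (Y - Z) Z
      rw [sub_add_cancel] at h
      rw [h]; ring
    have hpsiQ : ψT (1 - P) = 1 - μ := by
      rw [psi_sub, hpsi1, hpsiP]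
    have hdecomp : ∀ X : H →L[ℂ] H,
        ψT X = ψT (P ∘L X) + (ψT ((1 - P) ∘L (X ∘L P)) + ψT ((1 - P) ∘L (X ∘L (1 - P)))) := by
      intro X
      have hXeq : X = P ∘L X + ((1 - P) ∘L (X ∘L P) + (1 - P) ∘L (X ∘L (1 - P))) := by
        have h : X = P * X + ((1 - P) * (X * P) + (1 - P) * (X * (1 - P))) := by
          noncomm_ring
        simpa only [ContinuousLinearMap.mul_def] using h
      conv_lhs => rw [hXeq]
      rw [psi_add, psi_add]
    have hcross : ∀ X : H →L[ℂ] H, ψT ((1 - P) ∘L (X ∘L P)) = 0 := by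
      intro X
      have h : (1 - P) ∘L (X ∘L P) = ((1 - P) ∘L X) ∘L P := by
        rw [ContinuousLinearMap.comp_assoc]
      rw [h, psi_XP, ContinuousLinearMap.comp_apply, hTe, inner_smul_left, heQ]
      simp
    have hfirst : ∀ X : H →L[ℂ] H, ψT (P ∘L X) = μ * inner ℂ esharp (X esharp) := by
      intro X
      rw [psi_PX, hTe, map_smul, inner_smul_right]
    rcases hle.lt_or_eq with hlt | heq1
    · -- μ.re < 1
      have hne : (1 : ℂ) - μ ≠ 0 := by
        rw [hμeq, ← Complex.ofReal_one, ← Complex.ofReal_sub, Ne, Complex.ofReal_eq_zero]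
        exact (sub_pos.mpr hlt).ne'
      have psi_pos : ∀ A : H →L[ℂ] H, A.IsPositive → 0 ≤ ψT A := by
        intro A hA
        have hterm2 : ∀ k, (lamk k : ℂ) * (inner ℂ (ξ k) (A (ξ k)) : ℂ)
            = ((lamk k * (inner ℂ (ξ k) (A (ξ k)) : ℂ).re : ℝ) : ℂ) := by
          intro k
          conv_lhs => rw [(inner_pos A hA (ξ k)).1]
          push_cast
          ring
        rw [hψT, tsum_congr hterm2, ← Complex.ofReal_tsum]
        rw [Complex.zero_le_real]
        exact tsum_nonneg fun k => mul_nonneg (hlamk k) (inner_pos A hA (ξ k)).2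
      have hPsa : IsSelfAdjoint P := by
        rw [ContinuousLinearMap.isSelfAdjoint_iff_isSymmetric]
        intro x y
        simp only [ContinuousLinearMap.coe_coe, hP, inner_smul_left, inner_smul_right,
          inner_conj_symm]
        ring
      have hQsa : IsSelfAdjoint ((1 : H →L[ℂ] H) - P) := ((IsSelfAdjoint.one (H →L[ℂ] H)).sub hPsa)
      refine ⟨{ toFun := fun A => ((1 : ℂ) - μ)⁻¹ * ψT ((1 - P) ∘L A ∘L (1 - P))
                map_add' := ?_
                map_smul' := ?_ }, ?_, ?_, ?_⟩
      · intro A B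
        have h : (1 - P) ∘L (A + B) ∘L (1 - P)
            = (1 - P) ∘L A ∘L (1 - P) + (1 - P) ∘L B ∘L (1 - P) := by
          simp only [ContinuousLinearMap.add_comp, ContinuousLinearMap.comp_add]
        rw [h, psi_add]; ring
      · intro c A
        have h : (1 - P) ∘L (c • A) ∘L (1 - P) = c • ((1 - P) ∘L A ∘L (1 - P)) := by
          simp only [ContinuousLinearMap.smul_comp, ContinuousLinearMap.comp_smul]
        rw [h, psi_smul]
        simp only [RingHom.id_apply, smul_eq_mul]; ring
      · -- positivity of φ
        intro A hA
        simp only [LinearMap.coe_mk, AddHom.coe_mk]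
        have hpos2 : ((1 - P) ∘L A ∘L (1 - P)).IsPositive := by
          have h := hA.adjoint_conj (1 - P)
          rwa [hQsa.adjoint_eq] at h
        have h1 : (0 : ℂ) ≤ ((1 : ℂ) - μ)⁻¹ := by
          rw [hμeq, ← Complex.ofReal_one, ← Complex.ofReal_sub, ← Complex.ofReal_inv,
            Complex.zero_le_real]
          exact inv_nonneg.mpr (by linarith)
        exact mul_nonneg h1 (psi_pos _ hpos2)
      · -- φ 1 = 1
        simp only [LinearMap.coe_mk, AddHom.coe_mk]
        have h : (1 - P) ∘L (1 : H →L[ℂ] H) ∘L (1 - P) = 1 - P := by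
          ext x
          simp only [ContinuousLinearMap.comp_apply, ContinuousLinearMap.one_apply]
          exact hQQapp x
        rw [h, hpsiQ, inv_mul_cancel₀ hne]
      · -- preservation
        intro X
        simp only [LinearMap.coe_mk, AddHom.coe_mk]
        have hsimp4 : (1 - P) ∘L ((1 - P) ∘L X ∘L (1 - P)) ∘L (1 - P)
            = (1 - P) ∘L X ∘L (1 - P) := by
          ext x
          simp only [ContinuousLinearMap.comp_apply, hQQapp]
        rw [psi_add, psi_smul, psi_smul, hpsiP, hpsiQ, hsimp4]
        rw [hdecomp X, hcross X, hfirst X]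
        field_simp
        ring
    · -- μ.re = 1
      have hμ1 : μ = 1 := by rw [hμeq, heq1]; simp
      have hdiff : HasSum (fun k => lamk k - g k) 0 := by
        have h := hlamsum.sub hre
        rwa [heq1, sub_self] at h
      have hnn : ∀ k, 0 ≤ lamk k - g k := fun k => sub_nonneg.mpr (hgle k)
      have hzero : ∀ k, lamk k - g k = 0 := by
        intro k
        have hle0 : lamk k - g k ≤ 0 := le_hasSum hdiff k fun j _ => hnn j
        exact le_antisymm hle0 (hnn k)
      have hterm0 : ∀ k, lamk k = 0 ∨ (1 - P) (ξ k) = 0 := by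
        intro k
        by_cases hl : lamk k = 0
        · exact Or.inl hl
        · right
          have hn : Complex.normSq (inner ℂ (ξ k) esharp : ℂ) = 1 := by
            have h1 : lamk k * Complex.normSq (inner ℂ (ξ k) esharp : ℂ) = lamk k * 1 := by
              rw [mul_one]
              have h2 := hzero k
              simp only [hg] at h2
              linarith
            exact mul_left_cancel₀ hl h1
          have habs : ‖(inner ℂ (ξ k) esharp : ℂ)‖ = 1 := by
            have hsq1 : ‖(inner ℂ (ξ k) esharp : ℂ)‖ ^ 2 = 1 := by
              rw [Complex.sq_norm]; exact hn
            nlinarith [norm_nonneg (inner ℂ (ξ k) esharp : ℂ)]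
          have hxik0 : ξ k ≠ 0 := by
            intro h
            have := hξ.1 k
            rw [h, norm_zero] at this
            norm_num at this
          have he0 : esharp ≠ 0 := by
            intro h
            rw [h, norm_zero] at he
            norm_num at he
          have hnin : ‖(inner ℂ (ξ k) esharp : ℂ)‖ = ‖ξ k‖ * ‖esharp‖ := by
            rw [hξ.1 k, he, mul_one]; exact habs
          obtain ⟨c, hc0, hce⟩ := (norm_inner_eq_norm_iff hxik0 he0).mp hnin
          have hxik : ξ k = c⁻¹ • esharp := by
            rw [hce, smul_smul, inv_mul_cancel₀ hc0, one_smul]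
          rw [hxik, map_smul, hQe, smul_zero]
      have hQXQ0 : ∀ X : H →L[ℂ] H, ψT ((1 - P) ∘L X ∘L (1 - P)) = 0 := by
        intro X
        rw [hψT]
        have hz : ∀ k, (lamk k : ℂ) * (inner ℂ (ξ k) (((1 - P) ∘L X ∘L (1 - P)) (ξ k)) : ℂ)
            = 0 := by
          intro k
          rcases hterm0 k with h | h
          · rw [h]; simp
          · simp only [ContinuousLinearMap.comp_apply, h, map_zero, inner_zero_right, mul_zero]
        rw [tsum_congr hz, tsum_zero]
      refine ⟨{ toFun := fun A => (inner ℂ esharp (A esharp) : ℂ)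
                map_add' := ?_
                map_smul' := ?_ }, ?_, ?_, ?_⟩
      · intro A B
        simp [ContinuousLinearMap.add_apply, inner_add_right]
      · intro c A
        simp [ContinuousLinearMap.smul_apply, inner_smul_right]
      · -- positivity
        intro A hA
        simp only [LinearMap.coe_mk, AddHom.coe_mk]
        obtain ⟨h1, h2⟩ := inner_pos A hA esharp
        rw [h1, Complex.zero_le_real]
        exact h2
      · -- φ 1 = 1
        simp only [LinearMap.coe_mk, AddHom.coe_mk, ContinuousLinearMap.one_apply]
        exact hee
      · -- preservation
        intro X
        simp only [LinearMap.coe_mk, AddHom.coe_mk]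
        rw [psi_add, psi_smul, psi_smul, hpsiP, hpsiQ, hμ1]
        rw [hdecomp X, hcross X, hfirst X, hQXQ0 X, hμ1]
        ring
end

section
/- Factorization over the vacuum: let I, K ⊂ ℕ be disjoint finite sets and let X = ω_#(A)P_# + P_# A P_I + P_I A P_# + P_I A P_I + a P_{ℕ∖I} and Y = ω_#(B)P_# + P_# B P_K + P_K B P_# + P_K B P_K + b P_{ℕ∖K}, with A, B ∈ B(ℓ²({#}∪ℕ)), a, b ∈ ℂ. Then ⟨XY e_#, e_#⟩ = ⟨X e_#, e_#⟩ · ⟨Y e_#, e_#⟩. -/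
/-- Factorization over the vacuum.  For disjoint finite
`I, K ⊂ ℕ` and `X = ω_#(A)P_# + P_#AP_I + P_IAP_# + P_IAP_I + aP_{ℕ∖I}`,
`Y = ω_#(B)P_# + P_#BP_K + P_KBP_# + P_KBP_K + bP_{ℕ∖K}`, one has
`⟨XY e_#, e_#⟩ = ⟨X e_#, e_#⟩⟨Y e_#, e_#⟩`. -/
theorem vacuum_factorization
    (H : Type*) [NormedAddCommGroup H] [InnerProductSpace ℂ H] [CompleteSpace H]
    (e : HilbertBasis (Option ℕ) ℂ H)
    (ε : Option ℕ → Option ℕ → (H →L[ℂ] H))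
    (hε : ∀ m n x, ε m n x = (inner ℂ (e n) x : ℂ) • e m)
    (I K : Finset ℕ) (hIK : Disjoint I K)
    (A B : H →L[ℂ] H) (a b : ℂ) (X Y : H →L[ℂ] H)
    (hX : X = (inner ℂ (e none) (A (e none)) : ℂ) • ε none none
        + ε none none ∘L A ∘L (∑ i ∈ I, ε (some i) (some i))
        + (∑ i ∈ I, ε (some i) (some i)) ∘L A ∘L ε none none
        + (∑ i ∈ I, ε (some i) (some i)) ∘L A ∘L (∑ i ∈ I, ε (some i) (some i))
        + a • (1 - ε none none - ∑ i ∈ I, ε (some i) (some i)))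
    (hY : Y = (inner ℂ (e none) (B (e none)) : ℂ) • ε none none
        + ε none none ∘L B ∘L (∑ k ∈ K, ε (some k) (some k))
        + (∑ k ∈ K, ε (some k) (some k)) ∘L B ∘L ε none none
        + (∑ k ∈ K, ε (some k) (some k)) ∘L B ∘L (∑ k ∈ K, ε (some k) (some k))
        + b • (1 - ε none none - ∑ k ∈ K, ε (some k) (some k))) :
    (inner ℂ (e none) ((X ∘L Y) (e none)) : ℂ)
      = (inner ℂ (e none) (X (e none)) : ℂ) * (inner ℂ (e none) (Y (e none)) : ℂ) := by
  have horth : ∀ m n : Option ℕ, (inner ℂ (e m) (e n) : ℂ) = if m = n then 1 else 0 :=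
    orthonormal_iff_ite.mp e.orthonormal
  have hεnn : ε none none (e none) = e none := by simp [hε, horth, e.orthonormal.1 none]
  have hεnk : ∀ k : ℕ, ε none none (e (some k)) = 0 := by
    intro k; simp [hε, horth]
  have hsum0 : ∀ S : Finset ℕ, (∑ i ∈ S, ε (some i) (some i)) (e none) = 0 := by
    intro S
    simp [ContinuousLinearMap.sum_apply, hε, horth]
  have hsumk : ∀ (S : Finset ℕ) (k : ℕ), k ∉ S →
      (∑ i ∈ S, ε (some i) (some i)) (e (some k)) = 0 := by
    intro S k hk
    rw [ContinuousLinearMap.sum_apply]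
    refine Finset.sum_eq_zero fun i hi => ?_
    have : i ≠ k := fun h => hk (h ▸ hi)
    simp [hε, horth, this]
  have hinn0 : ∀ (S : Finset ℕ) (x : H),
      (inner ℂ (e none) ((∑ i ∈ S, ε (some i) (some i)) x) : ℂ) = 0 := by
    intro S x
    simp [ContinuousLinearMap.sum_apply, hε, inner_sum, inner_smul_right, horth]
  -- value of X on e none (inner with e none)
  have hXn : (inner ℂ (e none) (X (e none)) : ℂ) = inner ℂ (e none) (A (e none)) := by
    simp [hX, ContinuousLinearMap.add_apply, ContinuousLinearMap.comp_apply,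
      ContinuousLinearMap.smul_apply, ContinuousLinearMap.sub_apply,
      ContinuousLinearMap.one_apply, hsum0, hεnn, hinn0, inner_add_right,
      inner_smul_right, inner_sub_right, inner_sum, hε, horth, e.orthonormal.1 none]
  have hYn : (inner ℂ (e none) (Y (e none)) : ℂ) = inner ℂ (e none) (B (e none)) := by
    simp [hY, ContinuousLinearMap.add_apply, ContinuousLinearMap.comp_apply,
      ContinuousLinearMap.smul_apply, ContinuousLinearMap.sub_apply,
      ContinuousLinearMap.one_apply, hsum0, hεnn, hinn0, inner_add_right,
      inner_smul_right, inner_sub_right, inner_sum, hε, horth, e.orthonormal.1 none]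
  -- X kills (up to e none component) basis vectors e (some k) for k ∈ K
  have hXk : ∀ k ∈ K, (inner ℂ (e none) (X (e (some k))) : ℂ) = 0 := by
    intro k hk
    have hkI : k ∉ I := fun h => Finset.disjoint_left.mp hIK h hk
    simp [hX, ContinuousLinearMap.add_apply, ContinuousLinearMap.comp_apply,
      ContinuousLinearMap.smul_apply, ContinuousLinearMap.sub_apply,
      ContinuousLinearMap.one_apply, hεnk, hsumk I k hkI, hinn0, inner_add_right,
      inner_smul_right, inner_sub_right, horth]
  -- explicit form of Y (e none)
  have hYe : Y (e none) = (inner ℂ (e none) (B (e none)) : ℂ) • e none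
      + ∑ k ∈ K, (inner ℂ (e (some k)) (B (e none)) : ℂ) • e (some k) := by
    simp [hY, ContinuousLinearMap.add_apply, ContinuousLinearMap.comp_apply,
      ContinuousLinearMap.smul_apply, ContinuousLinearMap.sub_apply,
      ContinuousLinearMap.one_apply, hsum0, hεnn, ContinuousLinearMap.sum_apply, hε]
  rw [ContinuousLinearMap.comp_apply]
  conv_lhs => rw [hYe]
  rw [map_add, map_smul, map_sum, inner_add_right, inner_smul_right, inner_sum]
  have h2 : (∑ k ∈ K, (inner ℂ (e none)
      (X ((inner ℂ (e (some k)) (B (e none)) : ℂ) • e (some k))) : ℂ)) = 0 := by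
    refine Finset.sum_eq_zero fun k hk => ?_
    rw [map_smul, inner_smul_right, hXk k hk, mul_zero]
  rw [h2, add_zero, hXn, hYn, mul_comm]
end

section
/- Iterated factorization via conditional expectation: let M be a von Neumann algebra with a conditional expectation E onto a subalgebra N preserving a vector state ω = ⟨· Ω, Ω⟩, and suppose subalgebras M₁,…,Mₙ ⊆ M each containing N satisfy the pairwise independence condition: ω(XY) = ω(E(X)E(Y)) whenever X lies in the algebra generated by any subfamily {M_k : k ∈ S} ∪ N and Y in that generated by a disjoint subfamily. Then ω(X₁X₂⋯Xₙ) = ω(E(X₁)E(X₂)⋯E(Xₙ)) for all X_k ∈ M_k. -/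
/-- Lemma 2.2 of the paper: Iterated factorization via a
conditional expectation.  Let `E` be a conditional expectation onto a
subalgebra `N` of `B(H)` preserving the vector state `ω = ⟨·Ω,Ω⟩`, and let
`M₁,…,Mₙ` be subalgebras each containing `N` such that
`ω(XY) = ω(E(X)E(Y))` whenever `X` (resp. `Y`) lies in the algebra generated
by a subfamily `{M_k : k ∈ S} ∪ N` (resp. a disjoint subfamily).  Then
`ω(X₁⋯Xₙ) = ω(E(X₁)⋯E(Xₙ))` for all `X_k ∈ M_k`. -/
theorem iterated_factorization
    (Hs : Type*) [NormedAddCommGroup Hs] [InnerProductSpace ℂ Hs] [CompleteSpace Hs]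
    (Ω : Hs) (hΩ : ‖Ω‖ = 1)
    (ω : (Hs →L[ℂ] Hs) → ℂ) (hω : ∀ X, ω X = (inner ℂ Ω (X Ω) : ℂ))
    (n : ℕ) (Msub : Fin n → Subalgebra ℂ (Hs →L[ℂ] Hs))
    (N : Subalgebra ℂ (Hs →L[ℂ] Hs))
    (hNM : ∀ k, N ≤ Msub k)
    (E : (Hs →L[ℂ] Hs) →ₗ[ℂ] (Hs →L[ℂ] Hs))
    (hErange : ∀ X, E X ∈ N)
    (hEfix : ∀ Z ∈ N, E Z = Z)
    (hEbimod : ∀ (Z W X : Hs →L[ℂ] Hs), Z ∈ N → W ∈ N →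
      E (Z * X * W) = Z * E X * W)
    (hEω : ∀ X, ω (E X) = ω X)
    (hindep : ∀ (S S' : Finset (Fin n)), Disjoint S S' →
      ∀ X Y : Hs →L[ℂ] Hs,
        X ∈ Algebra.adjoin ℂ ((⋃ k ∈ S, (Msub k : Set (Hs →L[ℂ] Hs)))
            ∪ (N : Set (Hs →L[ℂ] Hs))) →
        Y ∈ Algebra.adjoin ℂ ((⋃ k ∈ S', (Msub k : Set (Hs →L[ℂ] Hs)))
            ∪ (N : Set (Hs →L[ℂ] Hs))) →
        ω (X * Y) = ω (E X * E Y)) :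
    ∀ X : Fin n → (Hs →L[ℂ] Hs), (∀ k, X k ∈ Msub k) →
      ω ((List.ofFn X).prod) = ω ((List.ofFn fun k => E (X k)).prod) := by
  classical
  -- products of elements lie in the adjoined algebra
  have hprod : ∀ (l : List (Fin n)) (X : Fin n → (Hs →L[ℂ] Hs)),
      (∀ k, X k ∈ Msub k) →
      (l.map X).prod ∈ Algebra.adjoin ℂ
        ((⋃ k ∈ l.toFinset, (Msub k : Set (Hs →L[ℂ] Hs)))
          ∪ (N : Set (Hs →L[ℂ] Hs))) := by
    intro l
    induction l with
    | nil => intro X hX; simpa using Subalgebra.one_mem _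
    | cons j l ih =>
      intro X hX
      simp only [List.map_cons, List.prod_cons]
      refine Subalgebra.mul_mem _ ?_ ?_
      · exact Algebra.subset_adjoin (Or.inl
          (Set.mem_iUnion₂.mpr ⟨j, by simp, hX j⟩))
      · refine Algebra.adjoin_mono ?_ (ih X hX)
        apply Set.union_subset_union_left
        intro x hx
        obtain ⟨i, hi, hxi⟩ := Set.mem_iUnion₂.mp hx
        exact Set.mem_iUnion₂.mpr ⟨i, by simp at hi ⊢; exact Or.inr hi, hxi⟩
  have key : ∀ (l : List (Fin n)), l.Nodup →
      ∀ (X : Fin n → (Hs →L[ℂ] Hs)), (∀ k, X k ∈ Msub k) →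
      ω ((l.map X).prod) = ω ((l.map fun k => E (X k)).prod) := by
    intro l
    induction l with
    | nil => intro _ X _; rfl
    | cons k l ih =>
      intro hnd X hX
      have hknl : k ∉ l := (List.nodup_cons.mp hnd).1
      have hndl : l.Nodup := (List.nodup_cons.mp hnd).2
      have hdisj : Disjoint ({k} : Finset (Fin n)) l.toFinset := by
        simpa using hknl
      have hYmem : (l.map X).prod ∈ Algebra.adjoin ℂ
          ((⋃ j ∈ l.toFinset, (Msub j : Set (Hs →L[ℂ] Hs)))
            ∪ (N : Set (Hs →L[ℂ] Hs))) := hprod l X hX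
      have hXk : X k ∈ Algebra.adjoin ℂ
          ((⋃ j ∈ ({k} : Finset (Fin n)), (Msub j : Set (Hs →L[ℂ] Hs)))
            ∪ (N : Set (Hs →L[ℂ] Hs))) := by
        exact Algebra.subset_adjoin (Or.inl
          (Set.mem_iUnion₂.mpr ⟨k, by simp, hX k⟩))
      have hEXk : E (X k) ∈ Algebra.adjoin ℂ
          ((⋃ j ∈ ({k} : Finset (Fin n)), (Msub j : Set (Hs →L[ℂ] Hs)))
            ∪ (N : Set (Hs →L[ℂ] Hs))) :=
        Algebra.subset_adjoin (Or.inr (hErange _))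
      have h1 : ω (X k * (l.map X).prod) = ω (E (X k) * E ((l.map X).prod)) :=
        hindep {k} l.toFinset hdisj _ _ hXk hYmem
      have h2 : ω (E (X k) * (l.map X).prod) = ω (E (X k) * E ((l.map X).prod)) := by
        have := hindep {k} l.toFinset hdisj _ _ hEXk hYmem
        rwa [hEfix _ (hErange (X k))] at this
      have h3 : ω (X k * (l.map X).prod) = ω (E (X k) * (l.map X).prod) := h1.trans h2.symm
      -- now push E (X k) into the rest of the product
      match l, hknl, hndl, hYmem, hdisj, h3, ih with
      | [], _, _, _, _, h3, _ =>
        simpa using h3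
      | j :: l', hknl, hndl, hYmem, hdisj, h3, ih =>
        have hjnl' : j ∉ l' := (List.nodup_cons.mp hndl).1
        set X' : Fin n → (Hs →L[ℂ] Hs) :=
          Function.update X j (E (X k) * X j) with hX'def
        have hX' : ∀ i, X' i ∈ Msub i := by
          intro i
          by_cases hij : i = j
          · subst hij
            simp only [hX'def, Function.update_self]
            exact Subalgebra.mul_mem _ (hNM i (hErange _)) (hX i)
          · simpa [hX'def, Function.update_of_ne hij] using hX i
        have hmapl' : ∀ (f g : Fin n → (Hs →L[ℂ] Hs)),
            (∀ i ∈ l', f i = g i) → l'.map f = l'.map g := by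
          intro f g h
          exact List.map_congr_left h
        have hl'X' : l'.map X' = l'.map X := by
          refine hmapl' _ _ ?_
          intro i hi
          have : i ≠ j := fun h => hjnl' (h ▸ hi)
          simp [hX'def, Function.update_of_ne this]
        have hprodX' : ((j :: l').map X').prod = E (X k) * (((j::l').map X).prod) := by
          simp only [List.map_cons, List.prod_cons, hl'X', hX'def,
            Function.update_self, List.map_cons, List.prod_cons, mul_assoc]
          rw [← hX'def, hl'X']
        have hEX'j : E (X' j) = E (X k) * E (X j) := by
          have h := hEbimod (E (X k)) 1 (X j) (hErange _) (Subalgebra.one_mem N)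
          simpa [hX'def, Function.update_self, mul_one] using h
        have hl'EX' : l'.map (fun i => E (X' i)) = l'.map (fun i => E (X i)) := by
          refine hmapl' _ _ ?_
          intro i hi
          have : i ≠ j := fun h => hjnl' (h ▸ hi)
          simp [hX'def, Function.update_of_ne this]
        have hprodEX' : ((j :: l').map fun i => E (X' i)).prod
            = E (X k) * (((j :: l').map fun i => E (X i)).prod) := by
          simp only [List.map_cons, List.prod_cons, hl'EX', hEX'j, mul_assoc]
        have hIH := ih hndl X' hX'
        calc ω (((k :: j :: l').map X).prod)
            = ω (X k * (((j :: l').map X).prod)) := by simp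
          _ = ω (E (X k) * (((j :: l').map X).prod)) := h3
          _ = ω (((j :: l').map X').prod) := by rw [hprodX']
          _ = ω (((j :: l').map fun i => E (X' i)).prod) := hIH
          _ = ω (E (X k) * (((j :: l').map fun i => E (X i)).prod)) := by
              rw [hprodEX']
          _ = ω (((k :: j :: l').map fun i => E (X i)).prod) := by
              simp
  intro X hX
  have h := key (List.finRange n) (List.nodup_finRange n) X hX
  simpa [List.ofFn_eq_map] using h
end
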